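/- Under the standing assumptions, the diagonal blocks Z_{ii} of the inverse A⁻¹ satisfy the identity −C_{i−1}L_{i−1}Z_{ii} − B_iM_{i+1}Z_{ii} + A_iZ_{ii} = I for i = 1,…,n, where C_0 = B_n = 0, L_0 = M_{n+1} = 0, and L_i, M_i are the matrices defined by the recursions L_1 = T_1 = A_1⁻¹B_1, T_i = I − A_i⁻¹C_{i−1}L_{i−1}, L_i = T_i⁻¹A_i⁻¹B_i (i = 2,…,n−1) and M_n = W_n = A_n⁻¹C_{n−1}, W_i = I − A_i⁻¹B_iM_{i+1}, M_i = W_i⁻¹A_i⁻¹C_{i−1} (i = n−1,…,2). -/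

import Mathlib

open scoped Matrix
attribute [local instance] Matrix.linftyOpNormedRing
set_option maxHeartbeats 2000000

/-- The block tridiagonal matrix with diagonal blocks `A 1, …, A n`, superdiagonal blocks
`B 1, …, B (n-1)` and subdiagonal blocks `C 1, …, C (n-1)`. -/
noncomputable def blockTridiag (n m : ℕ) (A B C : ℕ → Matrix (Fin m) (Fin m) ℂ) :
    Matrix (Fin n × Fin m) (Fin n × Fin m) ℂ :=
  Matrix.of fun p q =>
    if p.1 = q.1 then A ((p.1 : ℕ) + 1) p.2 q.2
    else if (p.1 : ℕ) + 1 = (q.1 : ℕ) then B ((p.1 : ℕ) + 1) p.2 q.2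
    else if (q.1 : ℕ) + 1 = (p.1 : ℕ) then C ((q.1 : ℕ) + 1) p.2 q.2
    else 0

lemma blockTridiag_row (n m : ℕ) (A B C : ℕ → Matrix (Fin m) (Fin m) ℂ)
    (hC0 : C 0 = 0) (hBn : B n = 0)
    (hAinv : IsUnit (blockTridiag n m A B C))
    (Z : ℕ → ℕ → Matrix (Fin m) (Fin m) ℂ)
    (hZ : ∀ i j : Fin n, Z ((i : ℕ) + 1) ((j : ℕ) + 1) =
      Matrix.of fun k l => (blockTridiag n m A B C)⁻¹ (i, k) (j, l)) :
    ∀ i j : ℕ, 1 ≤ i → i ≤ n → 1 ≤ j → j ≤ n →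
      C (i - 1) * Z (i - 1) j + A i * Z i j + B i * Z (i + 1) j
        = if i = j then 1 else 0 := by
  set N := blockTridiag n m A B C with hN
  have hdet : IsUnit N.det := (Matrix.isUnit_iff_isUnit_det N).mp hAinv
  have hNN : N * N⁻¹ = 1 := Matrix.mul_nonsing_inv N hdet
  intro i j hi1 hi2 hj1 hj2
  set fi : Fin n := ⟨i - 1, by omega⟩ with hfi
  set fj : Fin n := ⟨j - 1, by omega⟩ with hfj
  have hfiv : (fi : ℕ) = i - 1 := rfl
  have hfjv : (fj : ℕ) = j - 1 := rfl
  have hZj : ∀ q : Fin n, Z ((q : ℕ) + 1) j = Matrix.of fun k l => N⁻¹ (q, k) (fj, l) := by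
    intro q
    have h := hZ q fj
    rwa [show ((fj : ℕ) + 1) = j by omega] at h
  ext k l
  have hentry := congrFun (congrFun hNN (fi, k)) (fj, l)
  rw [Matrix.mul_apply, Fintype.sum_prod_type] at hentry
  have hsplit : ∀ q : Fin n,
      (∑ r, N (fi, k) (q, r) * N⁻¹ (q, r) (fj, l)) =
      (if q = fi then ∑ r, A i k r * N⁻¹ (q, r) (fj, l) else 0)
      + (if (q : ℕ) = i then ∑ r, B i k r * N⁻¹ (q, r) (fj, l) else 0)
      + (if (q : ℕ) + 2 = i then ∑ r, C (i - 1) k r * N⁻¹ (q, r) (fj, l) else 0) := by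
    intro q
    by_cases h1 : fi = q
    · have hq : (q : ℕ) = i - 1 := by rw [← h1]
      rw [if_pos h1.symm, if_neg (by omega : ¬((q : ℕ) = i)),
        if_neg (by omega : ¬((q : ℕ) + 2 = i)), add_zero, add_zero]
      simp only [hN, blockTridiag, Matrix.of_apply, if_pos h1]
      refine Finset.sum_congr rfl fun r _ => ?_
      rw [show (fi : ℕ) + 1 = i by omega]
    · by_cases h2 : (fi : ℕ) + 1 = (q : ℕ)
      · have hq : (q : ℕ) = i := by omega
        rw [if_neg (fun h => h1 h.symm), if_pos hq,
          if_neg (by omega : ¬((q : ℕ) + 2 = i)), zero_add, add_zero]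
        simp only [hN, blockTridiag, Matrix.of_apply, if_neg h1, if_pos h2]
        refine Finset.sum_congr rfl fun r _ => ?_
        rw [show (fi : ℕ) + 1 = i by omega]
      · by_cases h3 : (q : ℕ) + 1 = (fi : ℕ)
        · have hq : (q : ℕ) + 2 = i := by omega
          rw [if_neg (fun h => h1 h.symm), if_neg (by omega : ¬((q : ℕ) = i)), if_pos hq,
            zero_add, zero_add]
          simp only [hN, blockTridiag, Matrix.of_apply, if_neg h1, if_neg h2, if_pos h3]
          refine Finset.sum_congr rfl fun r _ => ?_
          rw [show (q : ℕ) + 1 = i - 1 by omega]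
        · rw [if_neg (fun h => h1 h.symm), if_neg (by omega : ¬((q : ℕ) = i)),
            if_neg (by omega : ¬((q : ℕ) + 2 = i)), add_zero, add_zero]
          simp only [hN, blockTridiag, Matrix.of_apply, if_neg h1, if_neg h2, if_neg h3]
          simp
  rw [Finset.sum_congr rfl fun q _ => hsplit q] at hentry
  rw [Finset.sum_add_distrib, Finset.sum_add_distrib] at hentry
  rw [Finset.sum_ite_eq' Finset.univ fi fun q => ∑ r, A i k r * N⁻¹ (q, r) (fj, l),
    if_pos (Finset.mem_univ fi)] at hentry
  -- second sum
  have hS2 : (∑ q : Fin n, if (q : ℕ) = i then ∑ r, B i k r * N⁻¹ (q, r) (fj, l) else 0)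
      = ∑ r, B i k r * Z (i + 1) j r l := by
    by_cases hin : i < n
    · set qi : Fin n := ⟨i, hin⟩ with hqi
      have : ∀ q : Fin n, ((q : ℕ) = i) ↔ (q = qi) := by
        intro q; rw [Fin.ext_iff]
      simp only [this]
      rw [Finset.sum_ite_eq' Finset.univ qi fun q => ∑ r, B i k r * N⁻¹ (q, r) (fj, l),
        if_pos (Finset.mem_univ qi)]
      have hz := hZj qi
      refine Finset.sum_congr rfl fun r _ => ?_
      rw [show (i + 1) = (qi : ℕ) + 1 by rfl, hz, Matrix.of_apply]
    · have hi : i = n := by omega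
      rw [show (∑ q : Fin n, if ((q : ℕ) = i) then ∑ r, B i k r * N⁻¹ (q, r) (fj, l) else 0)
          = 0 from Finset.sum_eq_zero fun q _ => if_neg (by omega : ¬((q : ℕ) = i))]
      rw [hi, hBn]
      simp
  rw [hS2] at hentry
  -- third sum
  have hS3 : (∑ q : Fin n, if (q : ℕ) + 2 = i then ∑ r, C (i - 1) k r * N⁻¹ (q, r) (fj, l) else 0)
      = ∑ r, C (i - 1) k r * Z (i - 1) j r l := by
    by_cases hi2' : 2 ≤ i
    · set qc : Fin n := ⟨i - 2, by omega⟩ with hqc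
      have hqcv : (qc : ℕ) = i - 2 := rfl
      have : ∀ q : Fin n, ((q : ℕ) + 2 = i) ↔ (q = qc) := by
        intro q; rw [Fin.ext_iff, hqcv]; omega
      simp only [this]
      rw [Finset.sum_ite_eq' Finset.univ qc fun q => ∑ r, C (i - 1) k r * N⁻¹ (q, r) (fj, l),
        if_pos (Finset.mem_univ qc)]
      have hz := hZj qc
      rw [show ((qc : ℕ) + 1) = i - 1 from by rw [hqcv]; omega] at hz
      refine Finset.sum_congr rfl fun r _ => ?_
      rw [hz, Matrix.of_apply]
    · have hi : i = 1 := by omega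
      rw [show (∑ q : Fin n, if ((q : ℕ) + 2 = i) then ∑ r, C (i-1) k r * N⁻¹ (q, r) (fj, l) else 0)
          = 0 from Finset.sum_eq_zero fun q _ => if_neg (by omega : ¬((q : ℕ) + 2 = i))]
      rw [hi]
      simp [hC0]
  rw [hS3] at hentry
  -- assemble
  have hZi : Z i j = Matrix.of fun k l => N⁻¹ (fi, k) (fj, l) := by
    have h := hZj fi
    rwa [show ((fi : ℕ) + 1) = i by omega] at h
  rw [Matrix.add_apply, Matrix.add_apply, Matrix.mul_apply, Matrix.mul_apply, Matrix.mul_apply]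
  have hAterm : (∑ r, A i k r * Z i j r l) = ∑ r, A i k r * N⁻¹ (fi, r) (fj, l) := by
    refine Finset.sum_congr rfl fun r _ => ?_
    rw [hZi, Matrix.of_apply]
  have hRHS : (1 : Matrix (Fin n × Fin m) (Fin n × Fin m) ℂ) (fi, k) (fj, l)
      = (if i = j then (1 : Matrix (Fin m) (Fin m) ℂ) else 0) k l := by
    by_cases hij : i = j
    · subst hij
      have hfifj : fi = fj := rfl
      rw [if_pos rfl, ← hfifj]
      simp [Matrix.one_apply, Prod.ext_iff]
    · have hfifj : fi ≠ fj := by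
        intro h
        have := congrArg Fin.val h
        rw [hfiv, hfjv] at this
        omega
      rw [if_neg hij]
      simp [Matrix.one_apply, Prod.ext_iff, hfifj]
  rw [hAterm, ← hRHS, ← hentry]
  ring

theorem diag_block_identity
    (n m : ℕ) (hn : 2 ≤ n) (hm : 1 ≤ m)
    (A B C : ℕ → Matrix (Fin m) (Fin m) ℂ)
    (hC0 : C 0 = 0) (hBn : B n = 0)
    (hAinv : IsUnit (blockTridiag n m A B C))
    (hB : ∀ i, 1 ≤ i → i ≤ n - 1 → IsUnit (B i))
    (hC : ∀ i, 1 ≤ i → i ≤ n - 1 → IsUnit (C i))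
    (hAi : ∀ i, 1 ≤ i → i ≤ n → IsUnit (A i))
    (hdom : ∀ i, 1 ≤ i → i ≤ n → ‖(A i)⁻¹ * C (i - 1)‖ + ‖(A i)⁻¹ * B i‖ ≤ 1)
    (hB1 : ‖(A 1)⁻¹ * B 1‖ < 1)
    (hCn : ‖(A n)⁻¹ * C (n - 1)‖ < 1)
    (L T : ℕ → Matrix (Fin m) (Fin m) ℂ)
    (hL1 : L 1 = (A 1)⁻¹ * B 1) (hT1 : T 1 = (A 1)⁻¹ * B 1)
    (hT : ∀ i, 2 ≤ i → i ≤ n - 1 → T i = 1 - (A i)⁻¹ * C (i - 1) * L (i - 1))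
    (hL : ∀ i, 2 ≤ i → i ≤ n - 1 → L i = (T i)⁻¹ * ((A i)⁻¹ * B i))
    (M W : ℕ → Matrix (Fin m) (Fin m) ℂ)
    (hMn : M n = (A n)⁻¹ * C (n - 1)) (hWn : W n = (A n)⁻¹ * C (n - 1))
    (hW : ∀ i, 2 ≤ i → i ≤ n - 1 → W i = 1 - (A i)⁻¹ * B i * M (i + 1))
    (hM : ∀ i, 2 ≤ i → i ≤ n - 1 → M i = (W i)⁻¹ * ((A i)⁻¹ * C (i - 1)))
    (hL0 : L 0 = 0) (hMn1 : M (n + 1) = 0)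
    (Z : ℕ → ℕ → Matrix (Fin m) (Fin m) ℂ)
    (hZ : ∀ i j : Fin n, Z ((i : ℕ) + 1) ((j : ℕ) + 1) =
      Matrix.of fun k l => (blockTridiag n m A B C)⁻¹ (i, k) (j, l)) :
    ∀ i, 1 ≤ i → i ≤ n →
      -(C (i - 1) * L (i - 1) * Z i i) - B i * M (i + 1) * Z i i + A i * Z i i = 1 := by
  haveI : Nonempty (Fin m) := ⟨⟨0, hm⟩⟩
  have hrow := blockTridiag_row n m A B C hC0 hBn hAinv Z hZ
  have hAl : ∀ i, 1 ≤ i → i ≤ n → (A i)⁻¹ * A i = 1 := fun i h1 h2 =>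
    Matrix.nonsing_inv_mul _ ((Matrix.isUnit_iff_isUnit_det _).mp (hAi i h1 h2))
  have hAr : ∀ i, 1 ≤ i → i ≤ n → A i * (A i)⁻¹ = 1 := fun i h1 h2 =>
    Matrix.mul_nonsing_inv _ ((Matrix.isUnit_iff_isUnit_det _).mp (hAi i h1 h2))
  have hbpos : ∀ i, 1 ≤ i → i ≤ n - 1 → 0 < ‖(A i)⁻¹ * B i‖ := by
    intro i h1 h2
    rw [norm_pos_iff]
    intro h0
    have hB0 : B i = 0 := by
      have h' := congrArg (fun X => A i * X) h0
      simp only [mul_zero] at h'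
      rwa [← mul_assoc, hAr i h1 (by omega), one_mul] at h'
    exact (hB i h1 h2).ne_zero hB0
  have hcpos : ∀ i, 2 ≤ i → i ≤ n → 0 < ‖(A i)⁻¹ * C (i - 1)‖ := by
    intro i h1 h2
    rw [norm_pos_iff]
    intro h0
    have hC0' : C (i - 1) = 0 := by
      have h' := congrArg (fun X => A i * X) h0
      simp only [mul_zero] at h'
      rwa [← mul_assoc, hAr i (by omega) h2, one_mul] at h'
    exact (hC (i - 1) (by omega) (by omega)).ne_zero hC0'
  -- generic elimination step
  have step : ∀ Ai Aiv Ci Li Bi Zp Zc Zn : Matrix (Fin m) (Fin m) ℂ,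
      Aiv * Ai = 1 → Ci * Zp + Ai * Zc + Bi * Zn = 0 → Ci * Zp = -(Ci * (Li * Zc)) →
      (1 - Aiv * Ci * Li) * Zc = -(Aiv * (Bi * Zn)) := by
    intro Ai Aiv Ci Li Bi Zp Zc Zn hA hrw hCZ
    have expand : (1 - Aiv * Ci * Li) * Zc + Aiv * (Bi * Zn)
        = Aiv * (Ci * Zp + Ai * Zc + Bi * Zn) := by
      rw [hCZ, mul_add, mul_add, ← mul_assoc Aiv Ai Zc, hA, one_mul]
      noncomm_ring
    rw [hrw, mul_zero] at expand
    exact eq_neg_of_add_eq_zero_left expand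
  have cancel : ∀ Tt X Y : Matrix (Fin m) (Fin m) ℂ, IsUnit Tt → Tt * X = Y → X = Tt⁻¹ * Y := by
    intro Tt X Y hu he
    rw [← he, ← mul_assoc, Matrix.nonsing_inv_mul _ ((Matrix.isUnit_iff_isUnit_det _).mp hu),
      one_mul]
  -- norm bounds for L, invertibility of T
  have hLfact : ∀ i, 1 ≤ i → i ≤ n - 1 → ‖L i‖ ≤ 1 ∧ (2 ≤ i → IsUnit (T i)) := by
    intro i
    induction i with
    | zero => exact fun h => absurd h (by omega)
    | succ k ih =>
      intro h1 h2
      by_cases hk : k = 0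
      · subst hk
        refine ⟨?_, fun h => absurd h (by omega)⟩
        show ‖L 1‖ ≤ 1
        rw [hL1]; exact le_of_lt hB1
      · have hk1 : 1 ≤ k := by omega
        have hLk := (ih hk1 (by omega)).1
        have hdom' := hdom (k + 1) (by omega) (by omega)
        rw [Nat.add_sub_cancel] at hdom'
        have hb := hbpos (k + 1) (by omega) h2
        have hnorm1 : ‖(A (k + 1))⁻¹ * C k * L k‖ < 1 := by
          calc ‖(A (k + 1))⁻¹ * C k * L k‖ ≤ ‖(A (k + 1))⁻¹ * C k‖ * ‖L k‖ := norm_mul_le _ _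
            _ ≤ ‖(A (k + 1))⁻¹ * C k‖ := by
                nlinarith [norm_nonneg ((A (k + 1))⁻¹ * C k)]
            _ < 1 := by linarith
        have hTu : IsUnit (T (k + 1)) := by
          rw [hT (k + 1) (by omega) h2, Nat.add_sub_cancel]
          have : HasSummableGeomSeries (Matrix (Fin m) (Fin m) ℂ) :=
            @instHasSummableGeomSeriesOfCompleteSpace _ _
              (by exact (inferInstance : CompleteSpace (Fin m → Fin m → ℂ)))
          exact isUnit_one_sub_of_norm_lt_one hnorm1
        refine ⟨?_, fun _ => hTu⟩
        have hTL : T (k + 1) * L (k + 1) = (A (k + 1))⁻¹ * B (k + 1) := by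
          rw [hL (k + 1) (by omega) h2, ← mul_assoc,
            Matrix.mul_nonsing_inv _ ((Matrix.isUnit_iff_isUnit_det _).mp hTu), one_mul]
        rw [hT (k + 1) (by omega) h2, Nat.add_sub_cancel, sub_mul, one_mul] at hTL
        have hLe : L (k + 1) = (A (k + 1))⁻¹ * B (k + 1)
            + (A (k + 1))⁻¹ * C k * L k * L (k + 1) := by
          rw [← hTL]; noncomm_ring
        have hbound : ‖L (k + 1)‖ ≤ ‖(A (k + 1))⁻¹ * B (k + 1)‖
            + ‖(A (k + 1))⁻¹ * C k‖ * ‖L (k + 1)‖ := by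
          have h1' : ‖(A (k + 1))⁻¹ * C k * L k * L (k + 1)‖
              ≤ ‖(A (k + 1))⁻¹ * C k‖ * ‖L (k + 1)‖ := by
            calc ‖(A (k + 1))⁻¹ * C k * L k * L (k + 1)‖
                ≤ ‖(A (k + 1))⁻¹ * C k * L k‖ * ‖L (k + 1)‖ := norm_mul_le _ _
              _ ≤ ‖(A (k + 1))⁻¹ * C k‖ * ‖L (k + 1)‖ := by
                  have h2' := norm_mul_le ((A (k + 1))⁻¹ * C k) (L k)
                  have h3' : ‖(A (k + 1))⁻¹ * C k * L k‖ ≤ ‖(A (k + 1))⁻¹ * C k‖ := by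
                    nlinarith [norm_nonneg ((A (k + 1))⁻¹ * C k)]
                  exact mul_le_mul_of_nonneg_right h3' (norm_nonneg _)
          calc ‖L (k + 1)‖ ≤ ‖(A (k + 1))⁻¹ * B (k + 1)‖
              + ‖(A (k + 1))⁻¹ * C k * L k * L (k + 1)‖ := by
                conv_lhs => rw [hLe]
                exact norm_add_le _ _
            _ ≤ _ := by linarith
        nlinarith [norm_nonneg (L (k + 1)), norm_nonneg ((A (k + 1))⁻¹ * C k)]
  -- norm bounds for M, invertibility of W
  have hMfact : ∀ d i, n - i ≤ d → 2 ≤ i → i ≤ n →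
      ‖M i‖ ≤ 1 ∧ (i ≤ n - 1 → IsUnit (W i)) := by
    intro d
    induction d with
    | zero =>
      intro i h0 h2 hn'
      have hi : i = n := by omega
      subst hi
      exact ⟨by rw [hMn]; exact le_of_lt hCn, fun h => absurd h (by omega)⟩
    | succ d ihd =>
      intro i h0 h2 hn'
      by_cases hi : i = n
      · subst hi
        exact ⟨by rw [hMn]; exact le_of_lt hCn, fun h => absurd h (by omega)⟩
      · have hi' : i ≤ n - 1 := by omega
        have hMk := (ihd (i + 1) (by omega) (by omega) (by omega)).1
        have hdom' := hdom i (by omega) hn'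
        have hc := hcpos i h2 hn'
        have hnorm1 : ‖(A i)⁻¹ * B i * M (i + 1)‖ < 1 := by
          calc ‖(A i)⁻¹ * B i * M (i + 1)‖ ≤ ‖(A i)⁻¹ * B i‖ * ‖M (i + 1)‖ := norm_mul_le _ _
            _ ≤ ‖(A i)⁻¹ * B i‖ := by nlinarith [norm_nonneg ((A i)⁻¹ * B i)]
            _ < 1 := by linarith
        have hWu : IsUnit (W i) := by
          rw [hW i h2 hi']
          have : HasSummableGeomSeries (Matrix (Fin m) (Fin m) ℂ) :=
            @instHasSummableGeomSeriesOfCompleteSpace _ _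
              (by exact (inferInstance : CompleteSpace (Fin m → Fin m → ℂ)))
          exact isUnit_one_sub_of_norm_lt_one hnorm1
        refine ⟨?_, fun _ => hWu⟩
        have hWM : W i * M i = (A i)⁻¹ * C (i - 1) := by
          rw [hM i h2 hi', ← mul_assoc,
            Matrix.mul_nonsing_inv _ ((Matrix.isUnit_iff_isUnit_det _).mp hWu), one_mul]
        rw [hW i h2 hi', sub_mul, one_mul] at hWM
        have hMe : M i = (A i)⁻¹ * C (i - 1) + (A i)⁻¹ * B i * M (i + 1) * M i := by
          rw [← hWM]; noncomm_ring
        have hbound : ‖M i‖ ≤ ‖(A i)⁻¹ * C (i - 1)‖ + ‖(A i)⁻¹ * B i‖ * ‖M i‖ := by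
          have h1' : ‖(A i)⁻¹ * B i * M (i + 1) * M i‖ ≤ ‖(A i)⁻¹ * B i‖ * ‖M i‖ := by
            calc ‖(A i)⁻¹ * B i * M (i + 1) * M i‖
                ≤ ‖(A i)⁻¹ * B i * M (i + 1)‖ * ‖M i‖ := norm_mul_le _ _
              _ ≤ ‖(A i)⁻¹ * B i‖ * ‖M i‖ := by
                  have h2' := norm_mul_le ((A i)⁻¹ * B i) (M (i + 1))
                  have h3' : ‖(A i)⁻¹ * B i * M (i + 1)‖ ≤ ‖(A i)⁻¹ * B i‖ := by
                    nlinarith [norm_nonneg ((A i)⁻¹ * B i)]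
                  exact mul_le_mul_of_nonneg_right h3' (norm_nonneg _)
          calc ‖M i‖ ≤ ‖(A i)⁻¹ * C (i - 1)‖ + ‖(A i)⁻¹ * B i * M (i + 1) * M i‖ := by
                conv_lhs => rw [hMe]
                exact norm_add_le _ _
            _ ≤ _ := by linarith
        nlinarith [norm_nonneg (M i), norm_nonneg ((A i)⁻¹ * B i)]
  -- claim 1 : forward elimination
  have claim1 : ∀ i, 1 ≤ i → i ≤ n - 1 → ∀ j, i < j → j ≤ n → Z i j = -(L i * Z (i + 1) j) := by
    intro i
    induction i with
    | zero => exact fun h => absurd h (by omega)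
    | succ k ih =>
      intro h1 h2 j hij hjn
      have hr0 := hrow (k + 1) j (by omega) (by omega) (by omega) hjn
      rw [if_neg (by omega : ¬(k + 1 = j))] at hr0
      by_cases hk : k = 0
      · subst hk
        have hrk : C 0 * Z 0 j + A 1 * Z 1 j + B 1 * Z 2 j = 0 := hr0
        have hs := step (A 1) ((A 1)⁻¹) (C 0) 0 (B 1) (Z 0 j) (Z 1 j) (Z 2 j)
          (hAl 1 (by omega) (by omega)) hrk (by rw [hC0]; simp)
        have hz1 : Z 1 j = -((A 1)⁻¹ * (B 1 * Z 2 j)) := by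
          simpa using hs
        show Z 1 j = -(L 1 * Z 2 j)
        rw [hz1, hL1, mul_assoc]
      · have hk1 : 1 ≤ k := by omega
        have ihk := ih hk1 (by omega) j (by omega) hjn
        have hrk : C k * Z k j + A (k + 1) * Z (k + 1) j + B (k + 1) * Z (k + 2) j = 0 := hr0
        have hTu : IsUnit (T (k + 1)) := (hLfact (k + 1) h1 h2).2 (by omega)
        have hs := step (A (k + 1)) ((A (k + 1))⁻¹) (C k) (L k) (B (k + 1))
          (Z k j) (Z (k + 1) j) (Z (k + 2) j)
          (hAl (k + 1) (by omega) (by omega)) hrk (by rw [ihk, mul_neg])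
        rw [show (1 : Matrix (Fin m) (Fin m) ℂ) - (A (k + 1))⁻¹ * C k * L k = T (k + 1) from by
          rw [hT (k + 1) (by omega) h2, Nat.add_sub_cancel]] at hs
        have hz1 := cancel _ _ _ hTu hs
        rw [hz1, hL (k + 1) (by omega) h2, mul_neg]
        congr 1
        noncomm_ring
  -- claim 2 : backward elimination
  have claim2' : ∀ d i, n - i ≤ d → 2 ≤ i → i ≤ n → ∀ j, 1 ≤ j → j < i →
      Z i j = -(M i * Z (i - 1) j) := by
    intro d
    induction d with
    | zero =>
      intro i h0 h2 hn' j hj1 hji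
      have hi : i = n := by omega
      have hr0 := hrow i j (by omega) (by omega) hj1 (by omega)
      rw [if_neg (by omega : ¬(i = j))] at hr0
      have hr' : B i * Z (i + 1) j + A i * Z i j + C (i - 1) * Z (i - 1) j = 0 := by
        rw [← hr0]; abel
      have hs := step (A i) ((A i)⁻¹) (B i) 0 (C (i - 1)) (Z (i + 1) j) (Z i j) (Z (i - 1) j)
        (hAl i (by omega) (by omega)) hr' (by rw [hi, hBn]; simp)
      have hz1 : Z i j = -((A i)⁻¹ * (C (i - 1) * Z (i - 1) j)) := by simpa using hs
      rw [hz1, hi, hMn]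
      congr 1
      noncomm_ring
    | succ d ihd =>
      intro i h0 h2 hn' j hj1 hji
      by_cases hi : i = n
      · have hr0 := hrow i j (by omega) (by omega) hj1 (by omega)
        rw [if_neg (by omega : ¬(i = j))] at hr0
        have hr' : B i * Z (i + 1) j + A i * Z i j + C (i - 1) * Z (i - 1) j = 0 := by
          rw [← hr0]; abel
        have hs := step (A i) ((A i)⁻¹) (B i) 0 (C (i - 1)) (Z (i + 1) j) (Z i j) (Z (i - 1) j)
          (hAl i (by omega) (by omega)) hr' (by rw [hi, hBn]; simp)
        have hz1 : Z i j = -((A i)⁻¹ * (C (i - 1) * Z (i - 1) j)) := by simpa using hs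
        rw [hz1, hi, hMn]
        congr 1
        noncomm_ring
      · have hi' : i ≤ n - 1 := by omega
        have ihk : Z (i + 1) j = -(M (i + 1) * Z i j) := by
          have h := ihd (i + 1) (by omega) (by omega) (by omega) j hj1 (by omega)
          rwa [show i + 1 - 1 = i from rfl] at h
        have hr0 := hrow i j (by omega) hn' hj1 (by omega)
        rw [if_neg (by omega : ¬(i = j))] at hr0
        have hr' : B i * Z (i + 1) j + A i * Z i j + C (i - 1) * Z (i - 1) j = 0 := by
          rw [← hr0]; abel
        have hWu : IsUnit (W i) := (hMfact (n - i) i le_rfl h2 hn').2 hi'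
        have hs := step (A i) ((A i)⁻¹) (B i) (M (i + 1)) (C (i - 1))
          (Z (i + 1) j) (Z i j) (Z (i - 1) j)
          (hAl i (by omega) hn') hr' (by rw [ihk, mul_neg])
        rw [show (1 : Matrix (Fin m) (Fin m) ℂ) - (A i)⁻¹ * B i * M (i + 1) = W i from by
          rw [hW i h2 hi']] at hs
        have hz1 := cancel _ _ _ hWu hs
        rw [hz1, hM i h2 hi', mul_neg]
        congr 1
        noncomm_ring
  have claim2 : ∀ i, 2 ≤ i → i ≤ n → ∀ j, 1 ≤ j → j < i → Z i j = -(M i * Z (i - 1) j) :=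
    fun i h2 hn' => claim2' (n - i) i le_rfl h2 hn'
  -- final assembly
  intro i h1 h2
  have hrii := hrow i i h1 h2 h1 h2
  rw [if_pos rfl] at hrii
  have hCterm : C (i - 1) * Z (i - 1) i = -(C (i - 1) * L (i - 1) * Z i i) := by
    by_cases hi1' : i = 1
    · subst hi1'
      show C 0 * Z 0 1 = -(C 0 * L 0 * Z 1 1)
      rw [hC0]; simp
    · have hc1 := claim1 (i - 1) (by omega) (by omega) i (by omega) h2
      rw [show i - 1 + 1 = i from by omega] at hc1
      rw [hc1, mul_neg, ← mul_assoc]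
  have hBterm : B i * Z (i + 1) i = -(B i * M (i + 1) * Z i i) := by
    by_cases hin : i = n
    · subst hin
      rw [hBn]; simp
    · have hc2 := claim2 (i + 1) (by omega) (by omega) i h1 (by omega)
      rw [show i + 1 - 1 = i from rfl] at hc2
      rw [hc2, mul_neg, ← mul_assoc]
  rw [hCterm, hBterm] at hrii
  rw [← hrii]
  abel
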